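/- Fix μ₀ > 0. There exists κ > 0 (depending only on s, r, μ₀) such that Γ̃_μ < μ − κ μ³ for every μ ∈ (0, μ₀). -/

import Mathlib

open MeasureTheory Real Filter

noncomputable section

/-- The Japanese bracket weight `⟨ξ⟩^α = (1+ξ²)^{α/2}`. -/
def jap (α ξ : ℝ) : ℝ := (1 + ξ ^ 2) ^ (α / 2)

/-- `w` is the Fourier transform of the (real-valued) function `u` in the sense of
tempered distributions. -/
def IsWeakFourier (u : ℝ → ℝ) (w : ℝ → ℂ) : Prop :=
  AEStronglyMeasurable w volume ∧
    ∀ φ : SchwartzMap ℝ ℂ,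
      ∫ x, (u x : ℂ) * (SchwartzMap.fourierTransformCLM ℂ φ) x = ∫ ξ, w ξ * φ ξ

open Classical in
/-- A choice of weak Fourier transform of `u`. -/
def wft (u : ℝ → ℝ) : ℝ → ℂ :=
  if h : ∃ w : ℝ → ℂ, IsWeakFourier u w then h.choose else 0

namespace Helper
open FourierTransform

/-- A smooth compactly supported real function, viewed as a complex Schwartz function. -/
def toSchwartz (g : ℝ → ℝ) (hg : ContDiff ℝ (⊤ : ℕ∞) g) (hsupp : HasCompactSupport g) :
    SchwartzMap ℝ ℂ where
  toFun := fun x => (g x : ℂ)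
  smooth' := (Complex.ofRealCLM.contDiff (n := (⊤ : ℕ∞))).comp hg
  decay' := by
    intro k n
    have hf : ContDiff ℝ (⊤ : ℕ∞) (fun x => (g x : ℂ)) :=
      (Complex.ofRealCLM.contDiff (n := (⊤ : ℕ∞))).comp hg
    have hsupp' : HasCompactSupport (fun x => (g x : ℂ)) :=
      hsupp.comp_left (g := fun r : ℝ => (r : ℂ)) (by simp)
    have h1 : HasCompactSupport (iteratedFDeriv ℝ n (fun x => (g x : ℂ))) :=
      hsupp'.iteratedFDeriv n
    have hcont : Continuous (fun x => ‖x‖ ^ k * ‖iteratedFDeriv ℝ n (fun y => (g y : ℂ)) x‖) :=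
      ((continuous_norm.pow k).mul
        ((hf.continuous_iteratedFDeriv (by exact_mod_cast le_top)).norm))
    have h2 : HasCompactSupport
        (fun x => ‖x‖ ^ k * ‖iteratedFDeriv ℝ n (fun y => (g y : ℂ)) x‖) :=
      (h1.norm).mul_left
    rcases hcont.bounded_above_of_compact_support h2 with ⟨C, hC⟩
    exact ⟨C, fun x => by
      simpa [Real.norm_eq_abs, (_root_.abs_of_nonneg (by positivity :
        (0:ℝ) ≤ ‖x‖ ^ k * ‖iteratedFDeriv ℝ n (fun y => (g y : ℂ)) x‖))] using hC x⟩

@[simp] lemma toSchwartz_apply (g : ℝ → ℝ) (hg : ContDiff ℝ (⊤ : ℕ∞) g)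
    (hsupp : HasCompactSupport g) (x : ℝ) : toSchwartz g hg hsupp x = (g x : ℂ) := rfl

/-- Multiplication formula / self-adjointness of the Fourier transform on `ℝ`. -/
lemma mulform {f g : ℝ → ℂ} (hf : Integrable f) (hg : Integrable g) :
    ∫ ξ, 𝓕 f ξ * g ξ = ∫ x, f x * 𝓕 g x := by
  have := VectorFourier.integral_fourierIntegral_smul_eq_flip (L := innerₗ ℝ)
    Real.continuous_fourierChar continuous_inner hf hg
  have hflip : (innerₗ ℝ).flip = innerₗ ℝ := by
    ext x y; simp [real_inner_comm]
  rw [hflip] at this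
  simp only [smul_eq_mul] at this
  exact this

/-- The key uniqueness property: if `u` has a genuine (continuous, positive, integrable,
bounded) Fourier transform `G`, then any choice of weak Fourier transform agrees with it a.e. -/
lemma wft_ae_eq {u : ℝ → ℝ} {G : ℝ → ℝ} (hGc : Continuous G) (hGpos : ∀ ξ, 0 < G ξ)
    (hGi : Integrable G) (hGb : ∃ M, ∀ ξ, |G ξ| ≤ M)
    (hGlb : ∃ m, 0 < m ∧ ∀ ξ ∈ Set.Icc (-1:ℝ) 1, m ≤ G ξ)
    (hw : IsWeakFourier u fun ξ => (G ξ : ℂ)) :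
    wft u =ᵐ[volume] fun ξ => (G ξ : ℂ) := by
  have hex : ∃ w, IsWeakFourier u w := ⟨_, hw⟩
  have hwft : IsWeakFourier u (wft u) := by
    rw [wft, dif_pos hex]; exact hex.choose_spec
  set w := wft u with hwdef
  have key : ∀ φ : SchwartzMap ℝ ℂ, ∫ ξ, w ξ * φ ξ = ∫ ξ, (G ξ : ℂ) * φ ξ := fun φ =>
    (hwft.2 φ).symm.trans (hw.2 φ)
  -- positivity of ∫ G·c for suitable bumps
  have hGint : ∀ c : ContDiffBump (0 : ℝ), Integrable (fun x => G x * c x) := by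
    intro c
    rcases hGb with ⟨M, hM⟩
    exact (c.integrable).bdd_mul hGc.aestronglyMeasurable (Eventually.of_forall fun x => by simpa [Real.norm_eq_abs] using hM x)
  -- Step 1 : w is locally integrable
  have hloc : LocallyIntegrable w volume := by
    rw [locallyIntegrable_iff]
    intro K hK
    by_contra hKint
    obtain ⟨R, hR⟩ := hK.isBounded.subset_closedBall 0
    have h01 : (0:ℝ) < |R| + 1 := by positivity
    set c : ContDiffBump (0:ℝ) := ⟨|R|+1, |R|+2, h01, by linarith⟩ with hc
    have hcsmooth : ContDiff ℝ (⊤ : ℕ∞) (⇑c) := c.contDiff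
    set Φ := toSchwartz (⇑c) hcsmooth c.hasCompactSupport with hΦ
    have hone : ∀ x ∈ K, c x = 1 := by
      intro x hx
      apply c.one_of_mem_closedBall
      have : x ∈ Metric.closedBall (0:ℝ) R := hR hx
      simp only [Metric.mem_closedBall] at this ⊢
      calc dist x 0 ≤ R := this
        _ ≤ |R| := le_abs_self R
        _ ≤ |R| + 1 := by linarith
    have hnint : ¬ Integrable (fun ξ => w ξ * Φ ξ) := by
      intro hint
      apply hKint
      have h1 : IntegrableOn (fun ξ => w ξ * Φ ξ) K := hint.integrableOn
      apply IntegrableOn.congr_fun h1 ?_ hK.measurableSet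
      intro x hx
      simp [hΦ, hone x hx]
    have h0 : ∫ ξ, w ξ * Φ ξ = 0 := integral_undef hnint
    have hpos : 0 < ∫ x, G x * c x := by
      rcases hGlb with ⟨m, hm, hmle⟩
      have h1 : ∫ x in Set.Icc (-1:ℝ) 1, G x * c x ≤ ∫ x, G x * c x := by
        apply setIntegral_le_integral (hGint c)
        filter_upwards with x
        exact mul_nonneg (hGpos x).le c.nonneg
      have h2 : (m * 2 : ℝ) ≤ ∫ x in Set.Icc (-1:ℝ) 1, G x * c x := by
        have hconst : ∫ x in Set.Icc (-1:ℝ) 1, m = m * 2 := by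
          simp [Real.volume_Icc]
          norm_num
          ring
        rw [← hconst]
        apply setIntegral_mono_on (integrableOn_const (by simp [Real.volume_Icc]))
          ((hGint c).integrableOn) measurableSet_Icc
        intro x hx
        have hcx : c x = 1 := by
          apply c.one_of_mem_closedBall
          simp only [Metric.mem_closedBall, Real.dist_eq, sub_zero]
          rcases hx with ⟨hx1, hx2⟩
          have hRnn : (0:ℝ) ≤ |R| := abs_nonneg R
          rw [abs_le]; constructor <;> [linarith; linarith]
        rw [hcx, mul_one]
        exact hmle x hx
      linarith
    have hre : ∫ ξ, (G ξ : ℂ) * Φ ξ = ((∫ x, G x * c x : ℝ) : ℂ) := by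
      have : ∫ ξ, (G ξ : ℂ) * Φ ξ = ∫ x, (((G x * c x : ℝ)) : ℂ) := by
        congr 1; ext x; simp [hΦ]
      rw [this]
      exact integral_ofReal (𝕜 := ℂ)
    rw [key Φ, hre] at h0
    exact absurd (by exact_mod_cast h0) (ne_of_gt hpos)
  -- Step 2 : conclude by density of test functions
  apply ae_eq_of_integral_contDiff_smul_eq hloc
    (Complex.ofRealCLM.continuous.comp hGc).locallyIntegrable
  intro g hg hgsupp
  have hg' : ContDiff ℝ (⊤ : ℕ∞) g := hg
  have := key (toSchwartz g hg' hgsupp)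
  simp only [toSchwartz_apply] at this
  calc ∫ x, g x • w x = ∫ x, w x * (g x : ℂ) := by
        congr 1; ext x; rw [mul_comm]; simp [Complex.real_smul]
    _ = ∫ x, (G x : ℂ) * (g x : ℂ) := this
    _ = ∫ x, g x • ((G x : ℝ) : ℂ) := by
        congr 1; ext x; rw [mul_comm]; simp [Complex.real_smul]

end Helper

namespace Helper
open FourierTransform

/-- The Gaussian trial function. -/
def gu (a b : ℝ) : ℝ → ℝ := fun x => a * rexp (-π * b * x ^ 2)

/-- Its Fourier transform. -/
def gG (a b : ℝ) : ℝ → ℝ := fun ξ => (a / Real.sqrt b) * rexp (-(π / b) * ξ ^ 2)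

lemma gu_sq (a b : ℝ) : (fun x => gu a b x ^ 2) = gu (a ^ 2) (2 * b) := by
  ext x
  simp only [gu, mul_pow]
  rw [sq (rexp _), ← Real.exp_add]
  ring_nf

lemma gG_cont (a b : ℝ) : Continuous (gG a b) := by
  unfold gG
  fun_prop

lemma gu_cont (a b : ℝ) : Continuous (gu a b) := by
  unfold gu
  fun_prop

lemma gu_integrable (a b : ℝ) (hb : 0 < b) : Integrable (gu a b) := by
  unfold gu
  have : Integrable (fun x : ℝ => rexp (-(π * b) * x ^ 2)) := integrable_exp_neg_mul_sq (by positivity)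
  exact (this.const_mul a).congr (EventuallyEq.of_eq (by ext x; ring_nf))

lemma gG_integrable (a b : ℝ) (hb : 0 < b) : Integrable (gG a b) := by
  unfold gG
  have : Integrable (fun x : ℝ => rexp (-(π / b) * x ^ 2)) := integrable_exp_neg_mul_sq (by positivity)
  exact this.const_mul _

lemma gu_fourier (a b : ℝ) (hb : 0 < b) :
    𝓕 (fun x : ℝ => ((gu a b x : ℝ) : ℂ)) = fun ξ : ℝ => ((gG a b ξ : ℝ) : ℂ) := by
  unfold gu gG
  have h1 : (fun x : ℝ => ((a * rexp (-π * b * x ^ 2) : ℝ) : ℂ)) =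
      (a : ℂ) • fun x : ℝ => Complex.exp (-π * (b:ℂ) * x ^ 2) := by
    ext x; push_cast; rw [Pi.smul_apply, smul_eq_mul]
  rw [h1]
  have h2 := VectorFourier.fourierIntegral_const_smul (E := ℂ)
    (𝐞) (volume : Measure ℝ) ((innerₗ ℝ)) (fun x : ℝ => Complex.exp (-π * (b:ℂ) * x ^ 2)) (a:ℂ)
  have hbre : 0 < (b:ℂ).re := by simpa using hb
  have h3 := fourier_gaussian_pi hbre
  ext ξ
  rw [show (𝓕 ((a:ℂ) • fun x : ℝ => Complex.exp (-π * (b:ℂ) * x ^ 2)))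
      = (a:ℂ) • 𝓕 (fun x : ℝ => Complex.exp (-π * (b:ℂ) * x ^ 2)) from h2, h3]
  have hsq : ((b:ℂ) ^ (1/2 : ℂ)) = (Real.sqrt b : ℂ) := by
    rw [Real.sqrt_eq_rpow, Complex.ofReal_cpow hb.le]; norm_num
  simp only [Pi.smul_apply, smul_eq_mul, hsq]
  rw [show (-↑π / (b:ℂ) * (ξ:ℂ) ^ 2) = ((-(π/b) * ξ^2 : ℝ) : ℂ) by push_cast; ring,
    ← Complex.ofReal_exp]
  push_cast
  field_simp

lemma gu_isWeakFourier (a b : ℝ) (hb : 0 < b) :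
    IsWeakFourier (gu a b) (fun ξ => ((gG a b ξ : ℝ) : ℂ)) := by
  constructor
  · exact (Complex.ofRealCLM.continuous.comp (gG_cont a b)).aestronglyMeasurable
  · intro φ
    have hf : Integrable (fun x : ℝ => ((gu a b x : ℝ) : ℂ)) := (gu_integrable a b hb).ofReal
    have := mulform hf φ.integrable
    rw [gu_fourier a b hb] at this
    exact this.symm

lemma jap_pos (α ξ : ℝ) : 0 < jap α ξ :=
  Real.rpow_pos_of_pos (by positivity) _

lemma jap_cont (α : ℝ) : Continuous (jap α) := by
  apply Continuous.rpow_const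
  · fun_prop
  · intro x; exact Or.inl (by positivity)

lemma jap_le_exp (α ξ : ℝ) : jap α ξ ≤ rexp (|α| / 2 * ξ ^ 2) := by
  rcases le_or_gt 0 α with hα | hα
  · rw [abs_of_nonneg hα, jap]
    have h1 : (1 + ξ ^ 2 : ℝ) ≤ rexp (ξ ^ 2) := by
      have := Real.add_one_le_exp (ξ ^ 2); linarith
    calc (1 + ξ ^ 2 : ℝ) ^ (α / 2) ≤ (rexp (ξ ^ 2)) ^ (α / 2) :=
          Real.rpow_le_rpow (by positivity) h1 (by positivity)
      _ = rexp (α / 2 * ξ ^ 2) := by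
          rw [← Real.exp_mul]; ring_nf
  · calc jap α ξ ≤ 1 :=
          Real.rpow_le_one_of_one_le_of_nonpos (by nlinarith [sq_nonneg ξ]) (by linarith)
      _ ≤ rexp (|α| / 2 * ξ ^ 2) := by
          rw [← Real.exp_zero]; exact Real.exp_le_exp.2 (by positivity)

lemma jap_lower (r ξ : ℝ) (hξ : ξ ^ 2 ≤ 1) : min 1 ((2:ℝ) ^ (r / 2)) ≤ jap r ξ := by
  rcases le_or_gt 0 r with hr | hr
  · refine le_trans (min_le_left _ _) ?_
    have := Real.rpow_le_rpow zero_le_one (by nlinarith [sq_nonneg ξ] : (1:ℝ) ≤ 1 + ξ ^ 2)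
      (by positivity : (0:ℝ) ≤ r / 2)
    rwa [Real.one_rpow] at this
  · refine le_trans (min_le_right _ _) ?_
    exact Real.rpow_le_rpow_of_nonpos (by positivity) (by nlinarith) (by linarith)

lemma integrable_jap_mul_gauss (α c : ℝ) (h : |α| / 2 < c) :
    Integrable (fun ξ : ℝ => jap α ξ * rexp (-c * ξ ^ 2)) := by
  have hint : Integrable (fun ξ : ℝ => rexp (-(c - |α| / 2) * ξ ^ 2)) :=
    integrable_exp_neg_mul_sq (by linarith)
  apply hint.mono' (((jap_cont α).mul (by fun_prop)).aestronglyMeasurable)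
  filter_upwards with ξ
  have h1 : 0 ≤ jap α ξ * rexp (-c * ξ ^ 2) := by
    have := jap_pos α ξ; positivity
  simp only [Real.norm_eq_abs, Pi.mul_apply]; rw [_root_.abs_of_nonneg h1]
  calc jap α ξ * rexp (-c * ξ ^ 2) ≤ rexp (|α| / 2 * ξ ^ 2) * rexp (-c * ξ ^ 2) :=
        mul_le_mul_of_nonneg_right (jap_le_exp α ξ) (Real.exp_nonneg _)
    _ = rexp (-(c - |α| / 2) * ξ ^ 2) := by rw [← Real.exp_add]; ring_nf

lemma gG_sq (a b ξ : ℝ) (hb : 0 < b) :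
    gG a b ξ ^ 2 = a ^ 2 / b * rexp (-(2 * π / b) * ξ ^ 2) := by
  rw [gG, mul_pow, div_pow, Real.sq_sqrt hb.le, sq (rexp _), ← Real.exp_add]
  ring_nf

lemma jap_gG_integrable (α a b : ℝ) (hb : 0 < b) (h : |α| * b ≤ π) :
    Integrable (fun ξ => jap α ξ * gG a b ξ ^ 2) := by
  have hlt : |α| / 2 < 2 * π / b := by
    rw [div_lt_div_iff₀ two_pos hb] at *
    nlinarith [pi_pos, abs_nonneg α]
  have := (integrable_jap_mul_gauss α (2 * π / b) hlt).const_mul (a ^ 2 / b)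
  apply this.congr
  filter_upwards with ξ
  rw [gG_sq a b ξ hb]; ring

lemma lf_bound (s a b : ℝ) (ha : 0 < a) (hb : 0 < b) (hs : 0 < s) (hsb : s * b ≤ π) :
    ∫ ξ, jap s ξ * gG a b ξ ^ 2 ≤ (1 + s * b) * (a ^ 2 / Real.sqrt (2 * b)) := by
  have hsb4 : s * b < 4 * π := by nlinarith [pi_pos]
  set c : ℝ := 2 * π / b - s / 2 with hc
  have hcpos : 0 < c := by
    rw [hc, sub_pos, div_lt_div_iff₀ two_pos hb]
    nlinarith
  have hstep1 : ∀ ξ : ℝ, jap s ξ * gG a b ξ ^ 2 ≤ a ^ 2 / b * rexp (-c * ξ ^ 2) := by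
    intro ξ
    rw [gG_sq a b ξ hb]
    calc jap s ξ * (a ^ 2 / b * rexp (-(2 * π / b) * ξ ^ 2))
        ≤ rexp (s / 2 * ξ ^ 2) * (a ^ 2 / b * rexp (-(2 * π / b) * ξ ^ 2)) := by
          apply mul_le_mul_of_nonneg_right _ (by positivity)
          simpa [abs_of_pos hs] using jap_le_exp s ξ
      _ = a ^ 2 / b * rexp (-c * ξ ^ 2) := by
          rw [mul_comm (rexp _), mul_assoc, ← Real.exp_add, hc]; ring_nf
  have hint : Integrable (fun ξ : ℝ => a ^ 2 / b * rexp (-c * ξ ^ 2)) :=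
    (integrable_exp_neg_mul_sq hcpos).const_mul _
  have h2 : ∫ ξ, jap s ξ * gG a b ξ ^ 2 ≤ ∫ ξ, a ^ 2 / b * rexp (-c * ξ ^ 2) := by
    apply integral_mono_of_nonneg _ hint (Eventually.of_forall hstep1)
    filter_upwards with ξ
    have := jap_pos s ξ; positivity
  have h3 : ∫ ξ : ℝ, a ^ 2 / b * rexp (-c * ξ ^ 2) = a ^ 2 / b * Real.sqrt (π / c) := by
    rw [integral_const_mul, integral_gaussian]
  have hπc : π / c ≤ (1 + s * b) ^ 2 * b / 2 := by
    rw [div_le_iff₀ hcpos]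
    have hcb : c * b = 2 * π - s * b / 2 := by rw [hc, sub_mul, div_mul_cancel₀ _ hb.ne']; ring
    have key : 2 * π ≤ (1 + s * b) ^ 2 * (2 * π - s * b / 2) := by
      nlinarith [Real.pi_gt_three, sq_nonneg (s * b), mul_nonneg hs.le hb.le,
        mul_le_mul_of_nonneg_left hsb (sq_nonneg (s * b))]
    calc π = (2 * π) / 2 := by ring
      _ ≤ (1 + s * b) ^ 2 * (2 * π - s * b / 2) / 2 := by linarith
      _ = (1 + s * b) ^ 2 * (c * b) / 2 := by rw [hcb]
      _ = (1 + s * b) ^ 2 * b / 2 * c := by ring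
  have h4 : Real.sqrt (π / c) ≤ (1 + s * b) * Real.sqrt (b / 2) := by
    have := Real.sqrt_le_sqrt hπc
    calc Real.sqrt (π / c) ≤ Real.sqrt ((1 + s * b) ^ 2 * b / 2) := this
      _ = (1 + s * b) * Real.sqrt (b / 2) := by
          rw [show (1 + s * b) ^ 2 * b / 2 = (1 + s * b) ^ 2 * (b / 2) by ring,
            Real.sqrt_mul (sq_nonneg _), Real.sqrt_sq (by nlinarith [mul_nonneg hs.le hb.le])]
  have hfin : a ^ 2 / b * ((1 + s * b) * Real.sqrt (b / 2)) =
      (1 + s * b) * (a ^ 2 / Real.sqrt (2 * b)) := by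
    have hs2b : Real.sqrt (b / 2) * Real.sqrt (2 * b) = b := by
      rw [← Real.sqrt_mul (by positivity), show b / 2 * (2 * b) = b ^ 2 by ring,
        Real.sqrt_sq hb.le]
    have h2b' : Real.sqrt (2 * b) = Real.sqrt 2 * Real.sqrt b := Real.sqrt_mul (by norm_num) b
    have hb2' : Real.sqrt (b / 2) = Real.sqrt b / Real.sqrt 2 := by
      rw [show b / 2 = b * 2⁻¹ by ring, Real.sqrt_mul hb.le, Real.sqrt_inv, div_eq_mul_inv]
    rw [h2b', hb2']
    have hbb : Real.sqrt b * Real.sqrt b = b := Real.mul_self_sqrt hb.le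
    have hsb2 : Real.sqrt b ≠ 0 := by positivity
    have hs22 : Real.sqrt 2 ≠ 0 := by positivity
    field_simp
    linear_combination hbb
  calc ∫ ξ, jap s ξ * gG a b ξ ^ 2 ≤ a ^ 2 / b * Real.sqrt (π / c) := by rw [← h3]; exact h2
    _ ≤ a ^ 2 / b * ((1 + s * b) * Real.sqrt (b / 2)) :=
        mul_le_mul_of_nonneg_left h4 (by positivity)
    _ = (1 + s * b) * (a ^ 2 / Real.sqrt (2 * b)) := hfin

lemma nf_bound (r a b : ℝ) (ha : 0 < a) (hb : 0 < b) (hb1 : b ≤ 1) (hrb : |r| * (2 * b) ≤ π) :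
    min 1 ((2:ℝ) ^ (r / 2)) * rexp (-π) * (2 * Real.sqrt b) * (a ^ 2 / Real.sqrt (2 * b)) ^ 2
      ≤ ∫ ξ, jap r ξ * gG (a ^ 2) (2 * b) ξ ^ 2 := by
  set A : ℝ := (a ^ 2 / Real.sqrt (2 * b)) ^ 2 with hA
  have hApos : 0 < A := by positivity
  set cr : ℝ := min 1 ((2:ℝ) ^ (r / 2)) with hcr
  have hcrpos : 0 < cr := lt_min one_pos (by positivity)
  have hfval : ∀ ξ : ℝ, gG (a ^ 2) (2 * b) ξ ^ 2 = A * rexp (-(π / b) * ξ ^ 2) := by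
    intro ξ
    rw [gG_sq _ _ _ (by positivity), hA, div_pow, Real.sq_sqrt (by positivity : (0:ℝ) ≤ 2*b),
      show 2 * π / (2 * b) = π / b by field_simp]
  have hfint : Integrable (fun ξ => jap r ξ * gG (a ^ 2) (2 * b) ξ ^ 2) :=
    jap_gG_integrable r (a ^ 2) (2 * b) (by positivity) hrb
  have hfnn : ∀ ξ : ℝ, 0 ≤ jap r ξ * gG (a ^ 2) (2 * b) ξ ^ 2 := fun ξ => by
    have := jap_pos r ξ; positivity
  set I : Set ℝ := Set.Icc (-Real.sqrt b) (Real.sqrt b) with hI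
  have hIm : MeasurableSet I := measurableSet_Icc
  have h1 : ∫ ξ in I, jap r ξ * gG (a ^ 2) (2 * b) ξ ^ 2
      ≤ ∫ ξ, jap r ξ * gG (a ^ 2) (2 * b) ξ ^ 2 :=
    setIntegral_le_integral hfint (Eventually.of_forall hfnn)
  have h2 : ∫ ξ in I, (cr * rexp (-π) * A : ℝ)
      ≤ ∫ ξ in I, jap r ξ * gG (a ^ 2) (2 * b) ξ ^ 2 := by
    apply setIntegral_mono_on (integrableOn_const (by simp [hI, Real.volume_Icc]))
      hfint.integrableOn hIm
    intro ξ hξ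
    have hξsq : ξ ^ 2 ≤ b := by
      rcases hξ with ⟨hξ1, hξ2⟩
      have habs : |ξ| ≤ Real.sqrt b := abs_le.2 ⟨hξ1, hξ2⟩
      calc ξ ^ 2 = |ξ| ^ 2 := (sq_abs ξ).symm
        _ ≤ Real.sqrt b ^ 2 := by nlinarith [abs_nonneg ξ]
        _ = b := Real.sq_sqrt hb.le
    have hj : cr ≤ jap r ξ := jap_lower r ξ (le_trans hξsq hb1)
    have hexp : rexp (-π) ≤ rexp (-(π / b) * ξ ^ 2) := by
      apply Real.exp_le_exp.2
      rw [neg_mul, neg_le_neg_iff]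
      calc π / b * ξ ^ 2 ≤ π / b * b := by
            apply mul_le_mul_of_nonneg_left hξsq (by positivity)
        _ = π := by field_simp
    rw [hfval ξ]
    calc cr * rexp (-π) * A ≤ jap r ξ * rexp (-(π / b) * ξ ^ 2) * A := by
          apply mul_le_mul_of_nonneg_right _ hApos.le
          exact mul_le_mul hj hexp (Real.exp_nonneg _) (le_trans hcrpos.le hj)
      _ = jap r ξ * (A * rexp (-(π / b) * ξ ^ 2)) := by ring
  have h3 : ∫ _ξ in I, (cr * rexp (-π) * A : ℝ) = cr * rexp (-π) * (2 * Real.sqrt b) * A := by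
    rw [setIntegral_const, smul_eq_mul, hI,
      Real.volume_real_Icc_of_le (by linarith [Real.sqrt_nonneg b])]
    rw [show Real.sqrt b - -Real.sqrt b = 2 * Real.sqrt b by ring]
    ring
  calc cr * rexp (-π) * (2 * Real.sqrt b) * A = ∫ _ξ in I, (cr * rexp (-π) * A : ℝ) := h3.symm
    _ ≤ ∫ ξ in I, jap r ξ * gG (a ^ 2) (2 * b) ξ ^ 2 := h2
    _ ≤ ∫ ξ, jap r ξ * gG (a ^ 2) (2 * b) ξ ^ 2 := h1

lemma gu_sq_integral (a b : ℝ) (hb : 0 < b) :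
    ∫ x, gu a b x ^ 2 = a ^ 2 / Real.sqrt (2 * b) := by
  have h1 : (fun x => gu a b x ^ 2) = fun x => a ^ 2 * rexp (-(2 * π * b) * x ^ 2) := by
    rw [gu_sq]; ext x; rw [gu]; ring_nf
  rw [h1, integral_const_mul, integral_gaussian]
  rw [show π / (2 * π * b) = 1 / (2 * b) by field_simp]
  rw [show (1:ℝ) / (2 * b) = (2 * b)⁻¹ by ring, Real.sqrt_inv]
  ring

end Helper

namespace Helper
open FourierTransform

lemma wft_gu (a b : ℝ) (ha : 0 < a) (hb : 0 < b) :
    wft (gu a b) =ᵐ[volume] fun ξ => ((gG a b ξ : ℝ) : ℂ) := by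
  apply wft_ae_eq (gG_cont a b) (fun ξ => by rw [gG]; positivity) (gG_integrable a b hb)
  · refine ⟨a / Real.sqrt b, fun ξ => ?_⟩
    rw [gG, abs_of_pos (by positivity)]
    calc a / Real.sqrt b * rexp (-(π / b) * ξ ^ 2) ≤ a / Real.sqrt b * 1 := by
          apply mul_le_mul_of_nonneg_left _ (by positivity)
          rw [Real.exp_le_one_iff]
          have : 0 ≤ π / b * ξ ^ 2 := by positivity
          linarith
      _ = a / Real.sqrt b := mul_one _
  · refine ⟨a / Real.sqrt b * rexp (-(π / b)), by positivity, fun ξ hξ => ?_⟩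
    rw [gG]
    apply mul_le_mul_of_nonneg_left _ (by positivity)
    apply Real.exp_le_exp.2
    rcases hξ with ⟨h1, h2⟩
    have hξsq : ξ ^ 2 ≤ 1 := by nlinarith
    rw [neg_mul, neg_le_neg_iff]
    calc π / b * ξ ^ 2 ≤ π / b * 1 := by
          apply mul_le_mul_of_nonneg_left hξsq (by positivity)
      _ = π / b := mul_one _
  · exact gu_isWeakFourier a b hb

end Helper

/-- `u` belongs to the Sobolev space `H^t(ℝ)`. -/
def MemH (t : ℝ) (u : ℝ → ℝ) : Prop :=
  MemLp u 2 volume ∧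
    ∃ w : ℝ → ℂ, IsWeakFourier u w ∧
      Integrable (fun ξ => jap (2 * t) ξ * ‖w ξ‖ ^ 2)

/-- The `H^t(ℝ)` norm of `u`, `‖u‖_{H^t} = (∫ ⟨ξ⟩^{2t} |û(ξ)|² dξ)^{1/2}`. -/
def HNorm (t : ℝ) (u : ℝ → ℝ) : ℝ :=
  Real.sqrt (∫ ξ, jap (2 * t) ξ * ‖wft u ξ‖ ^ 2)

/-- The `L^p(ℝ)` norm of `u`. -/
def LpNorm (p : ℝ) (u : ℝ → ℝ) : ℝ := (∫ x, |u x| ^ p) ^ (1 / p)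

/-- `Q(u) = ½ ∫ u² dx`. -/
def Qf (u : ℝ → ℝ) : ℝ := (1 / 2) * ∫ x, u x ^ 2

/-- `L(u) = ½ ∫ u Λ^s u dx = ½ ∫ ⟨ξ⟩^s |û|² dξ`. -/
def Lf (s : ℝ) (u : ℝ → ℝ) : ℝ := (1 / 2) * ∫ ξ, jap s ξ * ‖wft u ξ‖ ^ 2

/-- `Ñ(u) = ¼ ∫ u² Λ^r u² dx = ¼ ∫ ⟨ξ⟩^r |𝓕(u²)|² dξ`. -/
def Nf (r : ℝ) (u : ℝ → ℝ) : ℝ :=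
  (1 / 4) * ∫ ξ, jap r ξ * ‖wft (fun x => u x ^ 2) ξ‖ ^ 2

/-- `Ẽ(u) = L(u) − Ñ(u)`. -/
def Ef (s r : ℝ) (u : ℝ → ℝ) : ℝ := Lf s u - Nf r u

/-- `Γ̃_μ = inf {Ẽ(u) : u ∈ H^{s/2}, Q(u) = μ}`. -/
def Gamma (s r μ : ℝ) : ℝ :=
  sInf {e : ℝ | ∃ u : ℝ → ℝ, MemH (s / 2) u ∧ Qf u = μ ∧ Ef s r u = e}

/-- The Fourier transform of the nonlinear term `u Λ^r(u²)`, i.e. the convolution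
`û ∗ (⟨·⟩^r 𝓕(u²))`. -/
def nlFT (r : ℝ) (u : ℝ → ℝ) (ξ : ℝ) : ℂ :=
  ∫ η, wft u (ξ - η) * ((jap r η : ℂ) * wft (fun x => u x ^ 2) η)

/-- `u` solves the solitary-wave equation `-ν u + Λ^s u - u Λ^r(u²) = 0` as an identity of
tempered distributions (stated on the Fourier side, where the Fourier transform is an
isomorphism of the tempered distributions). -/
def IsSolitaryWave (s r ν : ℝ) (u : ℝ → ℝ) : Prop :=
  ∀ φ : SchwartzMap ℝ ℂ,
    ∫ ξ, (((jap s ξ - ν : ℝ) : ℂ) * wft u ξ - nlFT r u ξ) * φ ξ = 0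

/-- The commutator integral `∫ v (ρ_R Λ^α u − Λ^α(ρ_R u)) dx`, written on the Fourier side
(`𝓕(ρ_R)(t) = R ρ̂(R t)`). -/
def commutatorIntegral (α : ℝ) (ρ : SchwartzMap ℝ ℂ) (u v : ℝ → ℝ) (R : ℝ) : ℂ :=
  ∫ ξ, (starRingEnd ℂ) (wft v ξ) *
    ∫ t, ((R : ℂ) * (SchwartzMap.fourierTransformCLM ℂ ρ) (R * t)) *
      (((jap α (ξ - t) - jap α ξ : ℝ) : ℂ) * wft u (ξ - t))


set_option maxHeartbeats 1000000 in
/-- Improved upper bound: there is `κ > 0` with `Γ̃_μ < μ - κ μ³` for all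
`μ ∈ (0, μ₀)`. -/
theorem gamma_improved_bound (s r : ℝ) (hs : 0 < s) (hr : r < s - 1)
    (μ₀ : ℝ) (hμ₀ : 0 < μ₀) :
    ∃ κ : ℝ, 0 < κ ∧ ∀ μ ∈ Set.Ioo (0 : ℝ) μ₀, Gamma s r μ < μ - κ * μ ^ 3 := by
  classical
  set cr : ℝ := min 1 ((2:ℝ) ^ (r / 2)) with hcrdef
  have hcr : 0 < cr := lt_min one_pos (by positivity)
  set c₂ : ℝ := 2 * cr * rexp (-π) with hc₂def
  have hc₂ : 0 < c₂ := by positivity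
  set Bc : ℝ := s + 2 * |r| + 4 with hBcdef
  have hBc : 0 < Bc := by positivity
  set m : ℝ := min 1 (π / Bc) with hmdef
  have hm : 0 < m := lt_min one_pos (by positivity)
  set ε : ℝ := min (c₂ / (2 * s)) (Real.sqrt m / μ₀) with hεdef
  have hε : 0 < ε := lt_min (by positivity) (by positivity)
  set κ : ℝ := (1 / 2) * min (c₂ * ε / 2) (1 / μ₀ ^ 2) with hκdef
  have hκ : 0 < κ := by
    apply mul_pos (by norm_num)
    exact lt_min (by positivity) (by positivity)
  refine ⟨κ, hκ, ?_⟩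
  rintro μ ⟨hμ0, hμμ₀⟩
  -- parameters of the trial function
  set b : ℝ := ε ^ 2 * μ ^ 2 with hbdef
  have hb : 0 < b := by positivity
  have hsqb : Real.sqrt b = ε * μ := by
    rw [hbdef, show ε ^ 2 * μ ^ 2 = (ε * μ) ^ 2 by ring, Real.sqrt_sq (by positivity)]
  have hbm : b ≤ m := by
    have h1 : ε ≤ Real.sqrt m / μ₀ := min_le_right _ _
    have h2 : ε * μ ≤ Real.sqrt m := by
      calc ε * μ ≤ (Real.sqrt m / μ₀) * μ₀ := by
            apply mul_le_mul h1 hμμ₀.le hμ0.le (by positivity)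
        _ = Real.sqrt m := by field_simp
    calc b = (ε * μ) ^ 2 := by rw [hbdef]; ring
      _ ≤ Real.sqrt m ^ 2 := by nlinarith [mul_pos hε hμ0]
      _ = m := Real.sq_sqrt hm.le
  have hb1 : b ≤ 1 := le_trans hbm (min_le_left _ _)
  have hbBc : b * Bc ≤ π := by
    have h1 : b ≤ π / Bc := le_trans hbm (min_le_right _ _)
    calc b * Bc ≤ (π / Bc) * Bc := mul_le_mul_of_nonneg_right h1 hBc.le
      _ = π := by field_simp
  have hsb : s * b ≤ π := by
    have : s * b ≤ b * Bc := by
      rw [hBcdef]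
      nlinarith [abs_nonneg r, hb.le]
    linarith
  have hrb : |r| * (2 * b) ≤ π := by
    have : |r| * (2 * b) ≤ b * Bc := by
      rw [hBcdef]
      nlinarith [abs_nonneg r, hb.le]
    linarith
  set a : ℝ := Real.sqrt (2 * Real.sqrt (2 * b) * μ) with hadef
  have ha : 0 < a := Real.sqrt_pos.2 (by positivity)
  have ha2 : a ^ 2 = 2 * Real.sqrt (2 * b) * μ := Real.sq_sqrt (by positivity)
  have haμ : a ^ 2 / Real.sqrt (2 * b) = 2 * μ := by
    rw [ha2]; field_simp
  set u : ℝ → ℝ := Helper.gu a b with hudef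
  -- identification of the weak Fourier transforms
  have hwu : wft u =ᵐ[volume] fun ξ => ((Helper.gG a b ξ : ℝ) : ℂ) := Helper.wft_gu a b ha hb
  have husq : (fun x => u x ^ 2) = Helper.gu (a ^ 2) (2 * b) := Helper.gu_sq a b
  have hwu2 : wft (fun x => u x ^ 2) =ᵐ[volume]
      fun ξ => ((Helper.gG (a ^ 2) (2 * b) ξ : ℝ) : ℂ) := by
    rw [husq]
    exact Helper.wft_gu (a ^ 2) (2 * b) (by positivity) (by positivity)
  -- membership in H^{s/2}
  have hMem : MemH (s / 2) u := by
    constructor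
    · apply (memLp_two_iff_integrable_sq (Helper.gu_cont a b).aestronglyMeasurable).2
      rw [husq]
      exact Helper.gu_integrable (a ^ 2) (2 * b) (by positivity)
    · refine ⟨fun ξ => ((Helper.gG a b ξ : ℝ) : ℂ), Helper.gu_isWeakFourier a b hb, ?_⟩
      apply (Helper.jap_gG_integrable s a b hb (by rwa [abs_of_pos hs])).congr
      filter_upwards with ξ
      rw [show 2 * (s / 2) = s by ring, Complex.norm_real, Real.norm_eq_abs, sq_abs]
  -- the constraint
  have hQ : Qf u = μ := by
    rw [Qf, hudef, Helper.gu_sq_integral a b hb, ha2]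
    field_simp
  -- upper bound for Lf
  have hLf : Lf s u ≤ (1 + s * b) * μ := by
    have hcongr : ∫ ξ, jap s ξ * ‖wft u ξ‖ ^ 2 = ∫ ξ, jap s ξ * Helper.gG a b ξ ^ 2 := by
      apply integral_congr_ae
      filter_upwards [hwu] with ξ hξ
      rw [hξ, Complex.norm_real, Real.norm_eq_abs, sq_abs]
    rw [Lf, hcongr]
    calc (1 / 2 : ℝ) * ∫ ξ, jap s ξ * Helper.gG a b ξ ^ 2
        ≤ (1 / 2) * ((1 + s * b) * (a ^ 2 / Real.sqrt (2 * b))) := by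
          apply mul_le_mul_of_nonneg_left (Helper.lf_bound s a b ha hb hs hsb) (by norm_num)
      _ = (1 + s * b) * μ := by rw [haμ]; ring
  -- lower bound for Nf
  have hNf : c₂ * Real.sqrt b * μ ^ 2 ≤ Nf r u := by
    have hcongr : ∫ ξ, jap r ξ * ‖wft (fun x => u x ^ 2) ξ‖ ^ 2
        = ∫ ξ, jap r ξ * Helper.gG (a ^ 2) (2 * b) ξ ^ 2 := by
      apply integral_congr_ae
      filter_upwards [hwu2] with ξ hξ
      rw [hξ, Complex.norm_real, Real.norm_eq_abs, sq_abs]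
    rw [Nf, hcongr]
    have := Helper.nf_bound r a b ha hb hb1 hrb
    calc c₂ * Real.sqrt b * μ ^ 2
        = (1 / 4) * (cr * rexp (-π) * (2 * Real.sqrt b) * (2 * μ) ^ 2) := by
          rw [hc₂def]; ring
      _ = (1 / 4) * (cr * rexp (-π) * (2 * Real.sqrt b) * (a ^ 2 / Real.sqrt (2 * b)) ^ 2) := by
          rw [haμ]
      _ ≤ (1 / 4) * ∫ ξ, jap r ξ * Helper.gG (a ^ 2) (2 * b) ξ ^ 2 := by
          apply mul_le_mul_of_nonneg_left _ (by norm_num)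
          exact this
  -- energy bound
  have hEf : Ef s r u ≤ μ - 2 * κ * μ ^ 3 := by
    have h1 : Ef s r u ≤ (1 + s * b) * μ - c₂ * Real.sqrt b * μ ^ 2 := by
      rw [Ef]; linarith
    have h2 : (1 + s * b) * μ - c₂ * Real.sqrt b * μ ^ 2
        = μ + s * ε ^ 2 * μ ^ 3 - c₂ * ε * μ ^ 3 := by
      rw [hsqb, hbdef]; ring
    have h3 : s * ε ^ 2 ≤ c₂ * ε / 2 := by
      have hεle : ε ≤ c₂ / (2 * s) := min_le_left _ _
      have : s * ε ≤ c₂ / 2 := by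
        calc s * ε ≤ s * (c₂ / (2 * s)) := mul_le_mul_of_nonneg_left hεle hs.le
          _ = c₂ / 2 := by field_simp
      calc s * ε ^ 2 = (s * ε) * ε := by ring
        _ ≤ (c₂ / 2) * ε := mul_le_mul_of_nonneg_right this hε.le
        _ = c₂ * ε / 2 := by ring
    have h4 : 2 * κ ≤ c₂ * ε / 2 := by
      rw [hκdef]
      calc 2 * ((1/2) * min (c₂ * ε / 2) (1 / μ₀ ^ 2)) = min (c₂ * ε / 2) (1 / μ₀ ^ 2) := by ring
        _ ≤ c₂ * ε / 2 := min_le_left _ _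
    have hμ3 : 0 < μ ^ 3 := by positivity
    calc Ef s r u ≤ μ + s * ε ^ 2 * μ ^ 3 - c₂ * ε * μ ^ 3 := by rw [← h2]; exact h1
      _ ≤ μ + (c₂ * ε / 2) * μ ^ 3 - c₂ * ε * μ ^ 3 := by
          have := mul_le_mul_of_nonneg_right h3 hμ3.le; linarith
      _ = μ - (c₂ * ε / 2) * μ ^ 3 := by ring
      _ ≤ μ - 2 * κ * μ ^ 3 := by
          have := mul_le_mul_of_nonneg_right h4 hμ3.le; linarith
  -- membership of the energy value
  have he : Ef s r u ∈ {e : ℝ | ∃ u : ℝ → ℝ, MemH (s / 2) u ∧ Qf u = μ ∧ Ef s r u = e} :=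
    ⟨u, hMem, hQ, rfl⟩
  have hκμ : 0 < κ * μ ^ 3 := by positivity
  by_cases hbdd : BddBelow {e : ℝ | ∃ u : ℝ → ℝ, MemH (s / 2) u ∧ Qf u = μ ∧ Ef s r u = e}
  · calc Gamma s r μ ≤ Ef s r u := csInf_le hbdd he
      _ ≤ μ - 2 * κ * μ ^ 3 := hEf
      _ < μ - κ * μ ^ 3 := by nlinarith
  · rw [_root_.Gamma, csInf_of_not_bddBelow hbdd, Real.sInf_empty]
    have hκb : κ ≤ 1 / (2 * μ₀ ^ 2) := by
      rw [hκdef]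
      calc (1/2) * min (c₂ * ε / 2) (1 / μ₀ ^ 2) ≤ (1/2) * (1 / μ₀ ^ 2) :=
            mul_le_mul_of_nonneg_left (min_le_right _ _) (by norm_num)
        _ = 1 / (2 * μ₀ ^ 2) := by ring
    have hκμ2 : κ * μ ^ 2 < 1 := by
      calc κ * μ ^ 2 ≤ (1 / (2 * μ₀ ^ 2)) * μ ^ 2 :=
            mul_le_mul_of_nonneg_right hκb (by positivity)
        _ < (1 / (2 * μ₀ ^ 2)) * (2 * μ₀ ^ 2) := by
            apply mul_lt_mul_of_pos_left _ (by positivity)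
            nlinarith
        _ = 1 := by field_simp
    nlinarith [hκμ2, hμ0]

end
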